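/- arXiv:math-ph/0611004 — 2 statements merged into one kernel-verified Lean document; each statement's English description precedes it below -/
import Mathlib

section
/- Let Λ be a nonempty finite set, Φ(x) = |x|²/2 + Ψ(x) with Ψ : ℝ^Λ → ℝ smooth and all partial derivatives of ∇Ψ bounded, and g : ℝ^Λ → ℝ smooth with all partial derivatives of ∇g bounded. Let f : I × ℝ^Λ → ℝ be smooth on an open interval I, and assume that f, ∂f/∂t, and f·g are, locally uniformly in t ∈ I, bounded in absolute value by a fixed function of at most polynomial growth. Then for every t ∈ I the map t ↦ ⟨f(t,·)⟩_t is differentiable and (d/dt)⟨f(t,·)⟩_t = ⟨(∂f/∂t)(t,·)⟩_t + ( ⟨f(t,·)·g⟩_t − ⟨f(t,·)⟩_t·⟨g⟩_t ). -/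
open MeasureTheory Filter

variable {Λ : Type*} [Fintype Λ] [DecidableEq Λ]

/-- Partial derivative in direction `i`. -/
noncomputable def pd (i : Λ) (f : (Λ → ℝ) → ℝ) (x : Λ → ℝ) : ℝ :=
  fderiv ℝ f x (Pi.single i 1)

/-- Laplacian. -/
noncomputable def lap (f : (Λ → ℝ) → ℝ) (x : Λ → ℝ) : ℝ :=
  ∑ i, pd i (pd i f) x

/-- Gradient. -/
noncomputable def grad (f : (Λ → ℝ) → ℝ) (x : Λ → ℝ) : Λ → ℝ :=
  fun i => pd i f x

/-- Euclidean dot product. -/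
noncomputable def dot (u v : Λ → ℝ) : ℝ := ∑ i, u i * v i

/-- Hessian as a bilinear form. -/
noncomputable def hess (f : (Λ → ℝ) → ℝ) (x u v : Λ → ℝ) : ℝ :=
  ∑ i, ∑ j, pd i (pd j f) x * u i * v j

/-- All iterated derivatives are bounded. -/
def bddDerivs (F : (Λ → ℝ) → Λ → ℝ) : Prop :=
  ∀ n : ℕ, ∃ C : ℝ, ∀ x, ‖iteratedFDeriv ℝ n F x‖ ≤ C

/-- All iterated derivatives tend to zero at infinity. -/
def decays (v : (Λ → ℝ) → Λ → ℝ) : Prop :=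
  ∀ n : ℕ, Tendsto (fun x => ‖iteratedFDeriv ℝ n v x‖) (cocompact (Λ → ℝ)) (nhds 0)

/-- Gibbs mean of `h` w.r.t. the potential `Φ`. -/
noncomputable def gibbs (Φ h : (Λ → ℝ) → ℝ) : ℝ :=
  (∫ x, h x * Real.exp (-(Φ x))) / ∫ x, Real.exp (-(Φ x))


set_option linter.unusedSectionVars false

lemma aux_int_1d (A : ℝ) (m : ℕ) :
    Integrable (fun u : ℝ => (1 + |u|) ^ m * Real.exp (A * |u| - u ^ 2 / 2)) := by
  have hmeas : AEStronglyMeasurable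
      (fun u : ℝ => (1 + |u|) ^ m * Real.exp (A * |u| - u ^ 2 / 2)) volume :=
    (((continuous_const.add continuous_abs).pow m).mul
      (Real.continuous_exp.comp ((continuous_const.mul continuous_abs).sub
        ((continuous_pow 2).div_const 2)))).aestronglyMeasurable
  have hpow : Integrable (fun u : ℝ => u ^ (2 * m) * Real.exp (-(1/4 : ℝ) * u ^ 2)) := by
    have := integrable_rpow_mul_exp_neg_mul_sq (b := (1/4 : ℝ)) (by norm_num)
      (s := ((2 * m : ℕ) : ℝ))
      (lt_of_lt_of_le neg_one_lt_zero (Nat.cast_nonneg _))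
    have heq : (fun x : ℝ => x ^ ((2 * m : ℕ) : ℝ) * Real.exp (-(1/4 : ℝ) * x ^ 2))
        = fun x : ℝ => x ^ (2 * m) * Real.exp (-(1/4 : ℝ) * x ^ 2) := by
      funext x; rw [Real.rpow_natCast]
    rwa [heq] at this
  have hint : Integrable (fun u : ℝ =>
      Real.exp (A ^ 2) * 2 ^ m * (Real.exp (-(1/4 : ℝ) * u ^ 2)
        + u ^ (2 * m) * Real.exp (-(1/4 : ℝ) * u ^ 2))) :=
    ((integrable_exp_neg_mul_sq (by norm_num)).add hpow).const_mul _
  refine hint.mono hmeas ?_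
  filter_upwards with u
  have hu0 : (0:ℝ) ≤ u ^ (2 * m) := by rw [pow_mul]; positivity
  rw [Real.norm_of_nonneg (by positivity), Real.norm_of_nonneg (by positivity)]
  have h2 : Real.exp (A * |u| - u ^ 2 / 2)
      ≤ Real.exp (A ^ 2) * Real.exp (-(1/4 : ℝ) * u ^ 2) := by
    rw [← Real.exp_add]
    refine Real.exp_le_exp.2 ?_
    nlinarith [sq_nonneg (|u| / 2 - |A|), sq_abs u, sq_abs A,
      mul_le_mul_of_nonneg_right (le_abs_self A) (abs_nonneg u)]
  have h3 : (1 + |u|) ^ m ≤ 2 ^ m * (1 + u ^ (2 * m)) := by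
    have hmax : (1 + |u|) ≤ 2 * max 1 |u| := by
      rcases le_total 1 |u| with h | h
      · rw [max_eq_right h]; linarith
      · rw [max_eq_left h]; linarith
    have h4 : (max 1 |u|) ^ m ≤ 1 + u ^ (2 * m) := by
      have hu2 : u ^ (2 * m) = |u| ^ (2 * m) := by
        rw [pow_mul, pow_mul, sq_abs]
      rcases le_total 1 |u| with h | h
      · rw [max_eq_right h, hu2]
        have : |u| ^ m ≤ |u| ^ (2 * m) :=
          pow_le_pow_right₀ h (by omega)
        have h0 : (0:ℝ) ≤ |u| ^ (2*m) := by positivity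
        linarith
      · rw [max_eq_left h, one_pow, hu2]
        have h0 : (0:ℝ) ≤ |u| ^ (2*m) := by positivity
        linarith
    calc (1 + |u|) ^ m ≤ (2 * max 1 |u|) ^ m :=
          pow_le_pow_left₀ (by positivity) hmax m
      _ = 2 ^ m * (max 1 |u|) ^ m := mul_pow 2 _ m
      _ ≤ 2 ^ m * (1 + u ^ (2 * m)) := by gcongr
  calc (1 + |u|) ^ m * Real.exp (A * |u| - u ^ 2 / 2)
      ≤ (2 ^ m * (1 + u ^ (2 * m))) * (Real.exp (A ^ 2) * Real.exp (-(1/4 : ℝ) * u ^ 2)) :=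
        mul_le_mul h3 h2 (Real.exp_pos _).le (by positivity)
    _ = Real.exp (A ^ 2) * 2 ^ m * (Real.exp (-(1/4 : ℝ) * u ^ 2)
        + u ^ (2 * m) * Real.exp (-(1/4 : ℝ) * u ^ 2)) := by ring

lemma continuous_dot_self : Continuous (fun x : Λ → ℝ => dot x x) := by
  unfold dot
  exact continuous_finset_sum _ fun i _ => (continuous_apply i).mul (continuous_apply i)

lemma aux_int (A : ℝ) (m : ℕ) :
    Integrable (fun x : Λ → ℝ => (1 + ‖x‖) ^ m * Real.exp (A * ‖x‖ - dot x x / 2)) := by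
  classical
  have hmeas : AEStronglyMeasurable
      (fun x : Λ → ℝ => (1 + ‖x‖) ^ m * Real.exp (A * ‖x‖ - dot x x / 2)) volume :=
    (((continuous_const.add continuous_norm).pow m).mul
      (Real.continuous_exp.comp ((continuous_const.mul continuous_norm).sub
        (continuous_dot_self.div_const 2)))).aestronglyMeasurable
  have hint : Integrable (fun x : Λ → ℝ =>
      ∏ i, ((1 + |x i|) ^ m * Real.exp (|A| * |x i| - (x i) ^ 2 / 2))) :=
    Integrable.fintype_prod (fun _ => aux_int_1d |A| m)
  refine hint.mono hmeas ?_
  filter_upwards with x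
  have habs : ∀ i, |x i| ≤ ‖x‖ := fun i => by
    simpa [Real.norm_eq_abs] using norm_le_pi_norm x i
  have hone_le : ∀ (s : Finset Λ), (1:ℝ) ≤ ∏ i ∈ s, (1 + |x i|) := fun s => by
    calc (1:ℝ) = ∏ _i ∈ s, 1 := by simp
      _ ≤ ∏ i ∈ s, (1 + |x i|) :=
        Finset.prod_le_prod (fun i _ => zero_le_one) (fun i _ => by linarith [abs_nonneg (x i)])
  have hprod_ge : (1:ℝ) ≤ ∏ i, (1 + |x i|) := hone_le _
  have hsingle : ∀ i : Λ, 1 + |x i| ≤ ∏ j, (1 + |x j|) := fun i => by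
    rw [← Finset.mul_prod_erase Finset.univ _ (Finset.mem_univ i)]
    nth_rewrite 1 [← mul_one (1 + |x i|)]
    exact mul_le_mul_of_nonneg_left (hone_le _) (by linarith [abs_nonneg (x i)])
  have h1 : 1 + ‖x‖ ≤ ∏ i, (1 + |x i|) := by
    have hnorm : ‖x‖ ≤ (∏ i, (1 + |x i|)) - 1 := by
      refine pi_norm_le_iff_of_nonneg (by linarith) |>.2 fun i => ?_
      have := hsingle i
      rw [Real.norm_eq_abs]; linarith
    linarith
  have hsum : ‖x‖ ≤ ∑ i, |x i| := by
    rcases isEmpty_or_nonempty Λ with h | h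
    · simp [Subsingleton.elim x (0 : Λ → ℝ)]
    · refine pi_norm_le_iff_of_nonneg (Finset.sum_nonneg fun i _ => abs_nonneg _) |>.2 fun i => ?_
      rw [Real.norm_eq_abs]
      exact Finset.single_le_sum (fun j _ => abs_nonneg (x j)) (Finset.mem_univ i)
  have h2 : Real.exp (A * ‖x‖ - dot x x / 2)
      ≤ ∏ i, Real.exp (|A| * |x i| - (x i) ^ 2 / 2) := by
    rw [← Real.exp_sum]
    refine Real.exp_le_exp.2 ?_
    have hA : A * ‖x‖ ≤ |A| * ∑ i, |x i| := by
      calc A * ‖x‖ ≤ |A| * ‖x‖ :=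
            mul_le_mul_of_nonneg_right (le_abs_self A) (norm_nonneg x)
        _ ≤ |A| * ∑ i, |x i| := mul_le_mul_of_nonneg_left hsum (abs_nonneg A)
    have hdot : dot x x = ∑ i, (x i) ^ 2 := by
      unfold dot; exact Finset.sum_congr rfl fun i _ => (sq (x i)).symm
    rw [Finset.sum_sub_distrib, ← Finset.mul_sum, ← Finset.sum_div, hdot]
    linarith
  rw [Real.norm_of_nonneg (by positivity), Real.norm_of_nonneg (by positivity)]
  calc (1 + ‖x‖) ^ m * Real.exp (A * ‖x‖ - dot x x / 2)
      ≤ (∏ i, (1 + |x i|)) ^ m * ∏ i, Real.exp (|A| * |x i| - (x i) ^ 2 / 2) := by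
        refine mul_le_mul (pow_le_pow_left₀ (by positivity) h1 m) h2 (Real.exp_pos _).le
          (by positivity)
    _ = ∏ i, ((1 + |x i|) ^ m * Real.exp (|A| * |x i| - (x i) ^ 2 / 2)) := by
        rw [← Finset.prod_pow, ← Finset.prod_mul_distrib]

lemma lip_of_grad_bdd (F : (Λ → ℝ) → ℝ) (hF : ContDiff ℝ (⊤ : ℕ∞) F) (C : ℝ)
    (hC : ∀ x, ‖grad F x‖ ≤ C) :
    ∀ x : Λ → ℝ, |F x - F 0| ≤ ((Fintype.card Λ : ℝ) * C) * ‖x‖ := by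
  have hC0 : 0 ≤ C := le_trans (norm_nonneg _) (hC 0)
  have hL : ∀ x : Λ → ℝ, ‖fderiv ℝ F x‖ ≤ (Fintype.card Λ : ℝ) * C := by
    intro x
    refine ContinuousLinearMap.opNorm_le_bound _ (by positivity) fun v => ?_
    have hv : v = ∑ i, Pi.single i (v i) := (Finset.univ_sum_single v).symm
    have hexp : fderiv ℝ F x v = ∑ i, v i * fderiv ℝ F x (Pi.single i 1) := by
      conv_lhs => rw [hv]
      rw [map_sum]
      refine Finset.sum_congr rfl fun i _ => ?_
      have : (Pi.single i (v i) : Λ → ℝ) = v i • (Pi.single i (1:ℝ) : Λ → ℝ) := by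
        funext j
        rcases eq_or_ne j i with h | h
        · subst h; simp
        · simp [Pi.single_eq_of_ne h]
      rw [this, _root_.map_smul, smul_eq_mul]
    rw [Real.norm_eq_abs, hexp]
    calc |∑ i, v i * fderiv ℝ F x (Pi.single i 1)|
        ≤ ∑ i, |v i * fderiv ℝ F x (Pi.single i 1)| := Finset.abs_sum_le_sum_abs _ _
      _ ≤ ∑ _i : Λ, ‖v‖ * C := by
          refine Finset.sum_le_sum fun i _ => ?_
          rw [abs_mul]
          refine mul_le_mul ?_ ?_ (abs_nonneg _) (norm_nonneg v)
          · simpa [Real.norm_eq_abs] using norm_le_pi_norm v i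
          · have h1 : |fderiv ℝ F x (Pi.single i 1)| ≤ ‖grad F x‖ := by
              simpa [grad, pd, Real.norm_eq_abs] using norm_le_pi_norm (grad F x) i
            exact le_trans h1 (hC x)
      _ = (Fintype.card Λ : ℝ) * C * ‖v‖ := by
          rw [Finset.sum_const, Finset.card_univ, nsmul_eq_mul]; ring
  intro x
  have := Convex.norm_image_sub_le_of_norm_fderiv_le (s := (Set.univ : Set (Λ → ℝ)))
    (fun y _ => (hF.differentiable (by simp)).differentiableAt)
    (fun y _ => hL y) convex_univ (Set.mem_univ 0) (Set.mem_univ x)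
  simpa [Real.norm_eq_abs] using this

lemma affine_bound_of_bddDerivs (F : (Λ → ℝ) → ℝ) (hF : ContDiff ℝ (⊤ : ℕ∞) F)
    (hb : bddDerivs (grad F)) :
    ∃ K : ℝ, 0 ≤ K ∧ ∀ x, |F x| ≤ |F 0| + K * ‖x‖ := by
  obtain ⟨C, hC⟩ := hb 0
  have hC' : ∀ x, ‖grad F x‖ ≤ C := fun x => by
    simpa [norm_iteratedFDeriv_zero] using hC x
  have hC0 : 0 ≤ C := le_trans (norm_nonneg _) (hC' 0)
  refine ⟨(Fintype.card Λ : ℝ) * C, by positivity, fun x => ?_⟩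
  have := lip_of_grad_bdd F hF C hC' x
  calc |F x| = |F 0 + (F x - F 0)| := by ring_nf
    _ ≤ |F 0| + |F x - F 0| := abs_add_le _ _
    _ ≤ |F 0| + (Fintype.card Λ : ℝ) * C * ‖x‖ := by linarith

lemma norm_sq_le_dot (x : Λ → ℝ) : ‖x‖ ^ 2 ≤ dot x x := by
  have hdot0 : 0 ≤ dot x x := Finset.sum_nonneg fun i _ => mul_self_nonneg (x i)
  have hn : ‖x‖ ≤ Real.sqrt (dot x x) := by
    refine pi_norm_le_iff_of_nonneg (Real.sqrt_nonneg _) |>.2 fun i => ?_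
    rw [Real.norm_eq_abs, ← Real.sqrt_mul_self_eq_abs]
    exact Real.sqrt_le_sqrt (Finset.single_le_sum
      (f := fun j => x j * x j) (fun j _ => mul_self_nonneg (x j)) (Finset.mem_univ i))
  calc ‖x‖ ^ 2 ≤ Real.sqrt (dot x x) ^ 2 := by
        exact pow_le_pow_left₀ (norm_nonneg x) hn 2
    _ = dot x x := Real.sq_sqrt hdot0

lemma key_hasDerivAt
    (Ψ g Φ : (Λ → ℝ) → ℝ)
    (hΨs : ContDiff ℝ (⊤ : ℕ∞) Ψ) (hΨb : bddDerivs (grad Ψ))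
    (hgs : ContDiff ℝ (⊤ : ℕ∞) g) (hgb : bddDerivs (grad g))
    (hΦdef : ∀ x, Φ x = dot x x / 2 + Ψ x)
    (a b : ℝ) (I : Set ℝ) (hI : I = Set.Ioo a b)
    (f : ℝ → (Λ → ℝ) → ℝ)
    (hf : ContDiffOn ℝ (⊤ : ℕ∞) (fun p : ℝ × (Λ → ℝ) => f p.1 p.2) (I ×ˢ Set.univ))
    (hpoly : ∀ t₀ ∈ I, ∃ ε > (0 : ℝ), ∃ C : ℝ, ∃ m : ℕ,
      ∀ t ∈ I, |t - t₀| < ε → ∀ x,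
        |f t x| ≤ C * (1 + ‖x‖) ^ m ∧
        |deriv (fun s => f s x) t| ≤ C * (1 + ‖x‖) ^ m ∧
        |f t x * g x| ≤ C * (1 + ‖x‖) ^ m)
    (t : ℝ) (ht : t ∈ I) :
    Integrable (fun x => f t x * Real.exp (-(Φ x - t * g x))) ∧
    Integrable (fun x => deriv (fun s => f s x) t * Real.exp (-(Φ x - t * g x))) ∧
    Integrable (fun x => f t x * g x * Real.exp (-(Φ x - t * g x))) ∧
    HasDerivAt (fun s => ∫ x, f s x * Real.exp (-(Φ x - s * g x)))
      ((∫ x, deriv (fun s => f s x) t * Real.exp (-(Φ x - t * g x))) +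
        ∫ x, f t x * g x * Real.exp (-(Φ x - t * g x))) t := by
  -- basic setup
  have hIopen : IsOpen I := hI ▸ isOpen_Ioo
  obtain ⟨ε₁, hε₁, C, m, hCm⟩ := hpoly t ht
  obtain ⟨ε₂, hε₂, hball₂⟩ := Metric.isOpen_iff.1 hIopen t ht
  set ε : ℝ := min ε₁ ε₂ with hεdef
  have hε : 0 < ε := lt_min hε₁ hε₂
  have hballI : Metric.ball t ε ⊆ I :=
    (Metric.ball_subset_ball (min_le_right _ _)).trans hball₂
  have hballε₁ : ∀ s ∈ Metric.ball t ε, |s - t| < ε₁ := fun s hs => by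
    have : dist s t < ε := hs
    rw [Real.dist_eq] at this
    exact lt_of_lt_of_le this (min_le_left _ _)
  -- affine bounds
  obtain ⟨Kψ, hKψ0, hΨB⟩ := affine_bound_of_bddDerivs Ψ hΨs hΨb
  obtain ⟨Kg, hKg0, hgB⟩ := affine_bound_of_bddDerivs g hgs hgb
  set S : ℝ := |t| + ε with hSdef
  have hS0 : 0 ≤ S := by positivity
  set A : ℝ := Kψ + S * Kg with hAdef
  set B : ℝ := |Ψ 0| + S * |g 0| with hBdef
  -- exponential bound
  have hexp : ∀ s : ℝ, |s| ≤ S → ∀ x,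
      Real.exp (-(Φ x - s * g x)) ≤ Real.exp B * (1 : ℝ) * Real.exp (A * ‖x‖ - dot x x / 2) := by
    intro s hs x
    rw [mul_one, ← Real.exp_add]
    refine Real.exp_le_exp.2 ?_
    rw [hΦdef x]
    have h1 : -(Ψ x) ≤ |Ψ 0| + Kψ * ‖x‖ := by
      have := hΨB x
      have := neg_abs_le (Ψ x)
      linarith [abs_nonneg (Ψ x)]
    have h2 : s * g x ≤ S * (|g 0| + Kg * ‖x‖) := by
      calc s * g x ≤ |s * g x| := le_abs_self _
        _ = |s| * |g x| := abs_mul s (g x)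
        _ ≤ S * (|g 0| + Kg * ‖x‖) :=
            mul_le_mul hs (hgB x) (abs_nonneg _) hS0
    have h3 := norm_sq_le_dot x
    nlinarith [norm_nonneg x]
  have hexp' : ∀ s : ℝ, |s| ≤ S → ∀ x,
      Real.exp (-(Φ x - s * g x)) ≤ Real.exp B * Real.exp (A * ‖x‖ - dot x x / 2) := by
    intro s hs x
    simpa [mul_one] using hexp s hs x
  have htS : |t| ≤ S := by simp [hSdef]; linarith
  have hsS : ∀ s ∈ Metric.ball t ε, |s| ≤ S := by
    intro s hs
    have h1 : |s - t| < ε := by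
      have : dist s t < ε := hs
      rwa [Real.dist_eq] at this
    calc |s| = |t + (s - t)| := by ring_nf
      _ ≤ |t| + |s - t| := abs_add_le _ _
      _ ≤ |t| + ε := by linarith
  -- continuity facts
  have hΦc : Continuous Φ := by
    have hΦeq : Φ = fun x => dot x x / 2 + Ψ x := funext hΦdef
    rw [hΦeq]
    exact (continuous_dot_self.div_const 2).add hΨs.continuous
  have hgc : Continuous g := hgs.continuous
  have hEc : ∀ s : ℝ, Continuous (fun x : Λ → ℝ => Real.exp (-(Φ x - s * g x))) :=
    fun s => Real.continuous_exp.comp ((hΦc.sub (continuous_const.mul hgc)).neg)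
  have hfc : ∀ s ∈ I, Continuous (f s) := by
    intro s hs
    rw [← continuousOn_univ]
    exact (hf.continuousOn.comp (Continuous.prodMk_right s).continuousOn
      (fun x _ => ⟨hs, Set.mem_univ x⟩))
  have hdiffat : ∀ s ∈ I, ∀ x : Λ → ℝ,
      DifferentiableAt ℝ (fun p : ℝ × (Λ → ℝ) => f p.1 p.2) (s, x) := by
    intro s hs x
    exact (hf.differentiableOn (by simp)).differentiableAt
      ((hIopen.prod isOpen_univ).mem_nhds ⟨hs, Set.mem_univ x⟩)
  have hd : ∀ s ∈ I, ∀ x : Λ → ℝ,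
      HasDerivAt (fun u => f u x) (deriv (fun u => f u x) s) s := by
    intro s hs x
    have h2 : DifferentiableAt ℝ (fun u : ℝ => (u, x)) s :=
      differentiableAt_id.prodMk (differentiableAt_const x)
    have h3 := DifferentiableAt.comp s (hdiffat s hs x) h2
    exact (h3 : DifferentiableAt ℝ (fun u => f u x) s).hasDerivAt
  -- continuity of the time derivative
  have hderiv_cont : Continuous (fun x : Λ → ℝ => deriv (fun u => f u x) t) := by
    have hfd : ContinuousOn (fderiv ℝ (fun p : ℝ × (Λ → ℝ) => f p.1 p.2)) (I ×ˢ Set.univ) :=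
      hf.continuousOn_fderiv_of_isOpen (hIopen.prod isOpen_univ) (by exact_mod_cast le_top)
    have heq : (fun x : Λ → ℝ => deriv (fun u => f u x) t)
        = fun x => fderiv ℝ (fun p : ℝ × (Λ → ℝ) => f p.1 p.2) (t, x) ((1 : ℝ), (0 : Λ → ℝ)) := by
      funext x
      have hc : HasDerivAt (fun u : ℝ => (u, x)) ((1 : ℝ), (0 : Λ → ℝ)) t :=
        (hasDerivAt_id t).prodMk (hasDerivAt_const t x)
      have h1 := ((hdiffat t ht x).hasFDerivAt).comp_hasDerivAt t hc
      exact (h1 : HasDerivAt (fun u => f u x) _ t).deriv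
    rw [heq]
    have h2 : ContinuousOn
        (fun x : Λ → ℝ => fderiv ℝ (fun p : ℝ × (Λ → ℝ) => f p.1 p.2) (t, x)) Set.univ :=
      hfd.comp (Continuous.prodMk_right t).continuousOn (fun x _ => ⟨ht, Set.mem_univ x⟩)
    rw [← continuousOn_univ]
    exact (ContinuousLinearMap.apply ℝ ℝ ((1 : ℝ), (0 : Λ → ℝ))).continuous.comp_continuousOn h2
  -- integrable bounds
  have hbnd : ∀ (c : ℝ) (k : ℕ), Integrable (fun x : Λ → ℝ =>
      c * ((1 + ‖x‖) ^ k * Real.exp (A * ‖x‖ - dot x x / 2))) :=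
    fun c k => (aux_int A k).const_mul c
  have httriv : |t - t| < ε₁ := by simpa using hε₁
  -- integrability of f t * E
  have hInt1 : Integrable (fun x => f t x * Real.exp (-(Φ x - t * g x))) := by
    refine (hbnd (C * Real.exp B) m).mono
      (((hfc t ht).mul (hEc t)).aestronglyMeasurable) ?_
    filter_upwards with x
    rw [Real.norm_eq_abs, abs_mul, abs_of_nonneg (Real.exp_pos _).le]
    have h1 := (hCm t ht httriv x).1
    have h2 := hexp' t htS x
    have hCnn : 0 ≤ C * (1 + ‖x‖) ^ m := le_trans (abs_nonneg _) h1
    calc |f t x| * Real.exp (-(Φ x - t * g x))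
        ≤ (C * (1 + ‖x‖) ^ m) * (Real.exp B * Real.exp (A * ‖x‖ - dot x x / 2)) :=
          mul_le_mul h1 h2 (Real.exp_pos _).le hCnn
      _ = C * Real.exp B * ((1 + ‖x‖) ^ m * Real.exp (A * ‖x‖ - dot x x / 2)) := by ring
      _ ≤ ‖C * Real.exp B * ((1 + ‖x‖) ^ m * Real.exp (A * ‖x‖ - dot x x / 2))‖ :=
          le_abs_self _
  have hInt2 : Integrable (fun x => deriv (fun s => f s x) t * Real.exp (-(Φ x - t * g x))) := by
    refine (hbnd (C * Real.exp B) m).mono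
      ((hderiv_cont.mul (hEc t)).aestronglyMeasurable) ?_
    filter_upwards with x
    rw [Real.norm_eq_abs, abs_mul, abs_of_nonneg (Real.exp_pos _).le]
    have h1 := (hCm t ht httriv x).2.1
    have h2 := hexp' t htS x
    have hCnn : 0 ≤ C * (1 + ‖x‖) ^ m := le_trans (abs_nonneg _) h1
    calc |deriv (fun s => f s x) t| * Real.exp (-(Φ x - t * g x))
        ≤ (C * (1 + ‖x‖) ^ m) * (Real.exp B * Real.exp (A * ‖x‖ - dot x x / 2)) :=
          mul_le_mul h1 h2 (Real.exp_pos _).le hCnn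
      _ = C * Real.exp B * ((1 + ‖x‖) ^ m * Real.exp (A * ‖x‖ - dot x x / 2)) := by ring
      _ ≤ ‖C * Real.exp B * ((1 + ‖x‖) ^ m * Real.exp (A * ‖x‖ - dot x x / 2))‖ :=
          le_abs_self _
  have hInt3 : Integrable (fun x => f t x * g x * Real.exp (-(Φ x - t * g x))) := by
    refine (hbnd (C * Real.exp B) m).mono
      ((((hfc t ht).mul hgc).mul (hEc t)).aestronglyMeasurable) ?_
    filter_upwards with x
    rw [Real.norm_eq_abs, abs_mul, abs_of_nonneg (Real.exp_pos _).le]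
    have h1 := (hCm t ht httriv x).2.2
    have h2 := hexp' t htS x
    have hCnn : 0 ≤ C * (1 + ‖x‖) ^ m := le_trans (abs_nonneg _) h1
    calc |f t x * g x| * Real.exp (-(Φ x - t * g x))
        ≤ (C * (1 + ‖x‖) ^ m) * (Real.exp B * Real.exp (A * ‖x‖ - dot x x / 2)) :=
          mul_le_mul h1 h2 (Real.exp_pos _).le hCnn
      _ = C * Real.exp B * ((1 + ‖x‖) ^ m * Real.exp (A * ‖x‖ - dot x x / 2)) := by ring
      _ ≤ ‖C * Real.exp B * ((1 + ‖x‖) ^ m * Real.exp (A * ‖x‖ - dot x x / 2))‖ :=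
          le_abs_self _
  -- the dominated differentiation
  have hmain := hasDerivAt_integral_of_dominated_loc_of_deriv_le (μ := volume)
    (F := fun s x => f s x * Real.exp (-(Φ x - s * g x)))
    (F' := fun s x => (deriv (fun u => f u x) s + f s x * g x) * Real.exp (-(Φ x - s * g x)))
    (x₀ := t)
    (bound := fun x => 2 * C * Real.exp B * ((1 + ‖x‖) ^ m * Real.exp (A * ‖x‖ - dot x x / 2)))
    (Metric.ball_mem_nhds t hε) ?_ hInt1 ?_ ?_ (hbnd (2 * C * Real.exp B) m) ?_
  · -- conclude
    refine ⟨hInt1, hInt2, hInt3, ?_⟩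
    have heq2 : (fun x => (deriv (fun u => f u x) t + f t x * g x)
          * Real.exp (-(Φ x - t * g x)))
        = fun x => deriv (fun u => f u x) t * Real.exp (-(Φ x - t * g x))
          + f t x * g x * Real.exp (-(Φ x - t * g x)) := by
      funext x; ring
    have h2 := hmain.2
    rw [heq2, integral_add hInt2 hInt3] at h2
    exact h2
  · -- measurability of F s near t
    filter_upwards [hIopen.mem_nhds ht] with s hs
    exact ((hfc s hs).mul (hEc s)).aestronglyMeasurable
  · -- measurability of F' t
    exact ((hderiv_cont.add ((hfc t ht).mul hgc)).mul (hEc t)).aestronglyMeasurable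
  · -- bound
    filter_upwards with x s hs
    have hsI : s ∈ I := hballI hs
    have hsε₁ : |s - t| < ε₁ := hballε₁ s hs
    have h1 := (hCm s hsI hsε₁ x).2.1
    have h1' := (hCm s hsI hsε₁ x).2.2
    have h2 := hexp' s (hsS s hs) x
    rw [Real.norm_eq_abs, abs_mul, abs_of_nonneg (Real.exp_pos _).le]
    have hCnn : 0 ≤ C * (1 + ‖x‖) ^ m := le_trans (abs_nonneg _) h1
    calc |deriv (fun u => f u x) s + f s x * g x| * Real.exp (-(Φ x - s * g x))
        ≤ (|deriv (fun u => f u x) s| + |f s x * g x|) * Real.exp (-(Φ x - s * g x)) :=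
          mul_le_mul_of_nonneg_right (abs_add_le _ _) (Real.exp_pos _).le
      _ ≤ (C * (1 + ‖x‖) ^ m + C * (1 + ‖x‖) ^ m)
            * (Real.exp B * Real.exp (A * ‖x‖ - dot x x / 2)) := by
          refine mul_le_mul (by linarith) h2 (Real.exp_pos _).le (by linarith)
      _ = 2 * C * Real.exp B * ((1 + ‖x‖) ^ m * Real.exp (A * ‖x‖ - dot x x / 2)) := by ring
  · -- differentiability in s
    filter_upwards with x s hs
    have hsI : s ∈ I := hballI hs
    have hd1 := hd s hsI x
    have hd2 : HasDerivAt (fun u : ℝ => Real.exp (-(Φ x - u * g x)))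
        (g x * Real.exp (-(Φ x - s * g x))) s := by
      have h0 : HasDerivAt (fun u : ℝ => u * g x - Φ x) (g x) s := by
        simpa using ((hasDerivAt_id s).mul_const (g x)).sub_const (Φ x)
      have h1 := h0.exp
      have heq : (fun u : ℝ => Real.exp (u * g x - Φ x))
          = fun u : ℝ => Real.exp (-(Φ x - u * g x)) := by
        funext u; congr 1; ring
      rw [heq] at h1
      convert h1 using 1
      rw [show s * g x - Φ x = -(Φ x - s * g x) by ring]
      ring
    have := hd1.mul hd2
    refine this.congr_deriv ?_
    ring

/-- Differentiating a Gibbs expectation `⟨f(t,·)⟩_t` in the parameter `t`: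
`(d/dt)⟨f(t,·)⟩_t = ⟨∂_t f(t,·)⟩_t + cov_t(f(t,·), g)`, for `f` smooth on `I × ℝ^Λ`
such that `f`, `∂_t f` and `f·g` are, locally uniformly in `t ∈ I`, dominated by a fixed
function of at most polynomial growth. -/
theorem deriv_gibbs_expectation
    {Λ : Type*} [Fintype Λ] [DecidableEq Λ] [Nonempty Λ]
    (Ψ g Φ : (Λ → ℝ) → ℝ)
    (hΨs : ContDiff ℝ (⊤ : ℕ∞) Ψ) (hΨb : bddDerivs (grad Ψ))
    (hgs : ContDiff ℝ (⊤ : ℕ∞) g) (hgb : bddDerivs (grad g))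
    (hΦdef : ∀ x, Φ x = dot x x / 2 + Ψ x)
    (a b : ℝ) (I : Set ℝ) (hI : I = Set.Ioo a b)
    (f : ℝ → (Λ → ℝ) → ℝ)
    (hf : ContDiffOn ℝ (⊤ : ℕ∞) (fun p : ℝ × (Λ → ℝ) => f p.1 p.2) (I ×ˢ Set.univ))
    (hpoly : ∀ t₀ ∈ I, ∃ ε > (0 : ℝ), ∃ C : ℝ, ∃ m : ℕ,
      ∀ t ∈ I, |t - t₀| < ε → ∀ x,
        |f t x| ≤ C * (1 + ‖x‖) ^ m ∧
        |deriv (fun s => f s x) t| ≤ C * (1 + ‖x‖) ^ m ∧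
        |f t x * g x| ≤ C * (1 + ‖x‖) ^ m) :
    ∀ t ∈ I,
      HasDerivAt (fun s => gibbs (fun x => Φ x - s * g x) (f s))
        (gibbs (fun x => Φ x - t * g x) (fun x => deriv (fun s => f s x) t) +
          (gibbs (fun x => Φ x - t * g x) (fun x => f t x * g x) -
            gibbs (fun x => Φ x - t * g x) (f t) * gibbs (fun x => Φ x - t * g x) g))
        t := by
  intro t ht
  obtain ⟨hInt1, hInt2, hInt3, hN⟩ :=
    key_hasDerivAt Ψ g Φ hΨs hΨb hgs hgb hΦdef a b I hI f hf hpoly t ht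
  obtain ⟨Kg, hKg0, hgB⟩ := affine_bound_of_bddDerivs g hgs hgb
  have hpoly1 : ∀ t₀ ∈ I, ∃ ε > (0 : ℝ), ∃ C : ℝ, ∃ m : ℕ,
      ∀ t' ∈ I, |t' - t₀| < ε → ∀ x,
        |(fun _ _ => (1:ℝ)) t' x| ≤ C * (1 + ‖x‖) ^ m ∧
        |deriv (fun s => (fun _ _ => (1:ℝ)) s x) t'| ≤ C * (1 + ‖x‖) ^ m ∧
        |(fun _ _ => (1:ℝ)) t' x * g x| ≤ C * (1 + ‖x‖) ^ m := by
    intro t₀ _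
    refine ⟨1, one_pos, |g 0| + Kg + 1, 1, fun t' _ _ x => ?_⟩
    have hx : (0:ℝ) ≤ ‖x‖ := norm_nonneg x
    have hg0 : (0:ℝ) ≤ |g 0| := abs_nonneg _
    refine ⟨?_, ?_, ?_⟩
    · simp only [abs_one, pow_one]; nlinarith
    · simp only [deriv_const', abs_zero, pow_one]; nlinarith
    · simp only [one_mul, pow_one]
      calc |g x| ≤ |g 0| + Kg * ‖x‖ := hgB x
        _ ≤ (|g 0| + Kg + 1) * (1 + ‖x‖) := by nlinarith
  have hconst : ContDiffOn ℝ (⊤ : ℕ∞)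
      (fun p : ℝ × (Λ → ℝ) => (fun _ _ => (1:ℝ)) p.1 p.2) (I ×ˢ Set.univ) :=
    contDiffOn_const
  obtain ⟨hD1, -, hD3, hDder⟩ :=
    key_hasDerivAt Ψ g Φ hΨs hΨb hgs hgb hΦdef a b I hI (fun _ _ => (1:ℝ)) hconst hpoly1 t ht
  simp only [one_mul, deriv_const', zero_mul, integral_zero, zero_add] at hD1 hD3 hDder
  have hpos : 0 < ∫ x : Λ → ℝ, Real.exp (-(Φ x - t * g x)) := by
    rw [integral_pos_iff_support_of_nonneg_ae
      (Filter.Eventually.of_forall fun x => (Real.exp_pos _).le) hD1]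
    have hsupp : Function.support (fun x : Λ → ℝ => Real.exp (-(Φ x - t * g x))) = Set.univ :=
      Set.eq_univ_of_forall fun x => (Real.exp_pos _).ne'
    rw [hsupp]
    exact IsOpen.measure_pos volume isOpen_univ ⟨0, trivial⟩
  have hDne : (∫ x : Λ → ℝ, Real.exp (-(Φ x - t * g x))) ≠ 0 := ne_of_gt hpos
  have hq := hN.div hDder hDne
  simp only [gibbs]
  refine hq.congr_deriv ?_
  set D := (∫ x : Λ → ℝ, Real.exp (-(Φ x - t * g x))) with hDdef
  set N1 := (∫ x : Λ → ℝ, deriv (fun s => f s x) t * Real.exp (-(Φ x - t * g x))) with hN1def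
  set N2 := (∫ x : Λ → ℝ, f t x * g x * Real.exp (-(Φ x - t * g x))) with hN2def
  set N0 := (∫ x : Λ → ℝ, f t x * Real.exp (-(Φ x - t * g x))) with hN0def
  set DG := (∫ x : Λ → ℝ, g x * Real.exp (-(Φ x - t * g x))) with hDGdef
  field_simp
  ring
end

section
/- Let N ≥ 1, let φ : ℝ^N → ℝ be smooth with Hess φ(x) ≥ δ·Id for all x (δ > 0), and let V : ℝ^N → ℝ^N be a smooth compactly supported vector field. Set q = −ΔV + (|∇φ|²/4 − Δφ/2)V + (Hess φ)V, where −Δ acts componentwise and Hess φ acts as a matrix. Then ∫ q(x)·V(x) dx ≥ δ ∫ |V(x)|² dx, and consequently the L² bound ‖V‖_{L²} ≤ δ^{−1} ‖q‖_{L²} holds. -/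
open MeasureTheory Filter

variable {Λ : Type*} [Fintype Λ] [DecidableEq Λ]

section AuxWitten

variable {N : ℕ}

lemma contDiff_pd' {f : (Fin N → ℝ) → ℝ} (hf : ContDiff ℝ (⊤ : ℕ∞) f) (i : Fin N) :
    ContDiff ℝ (⊤ : ℕ∞) (pd i f) := by
  have h : ContDiff ℝ (⊤ : ℕ∞)
      (fun x => (ContinuousLinearMap.apply ℝ ℝ (Pi.single i 1 : Fin N → ℝ)) (fderiv ℝ f x)) :=
    (ContinuousLinearMap.apply ℝ ℝ (Pi.single i 1 : Fin N → ℝ)).contDiff.comp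
      (hf.fderiv_right (by exact_mod_cast le_top))
  exact h

lemma hcs_pd' {f : (Fin N → ℝ) → ℝ} (hf : HasCompactSupport f) (i : Fin N) :
    HasCompactSupport (pd i f) :=
  hf.fderiv_apply ℝ (Pi.single i 1)

lemma pd_mul' {f g : (Fin N → ℝ) → ℝ} (hf : ContDiff ℝ (⊤ : ℕ∞) f)
    (hg : ContDiff ℝ (⊤ : ℕ∞) g) (i : Fin N) (x : Fin N → ℝ) :
    pd i (fun y => f y * g y) x = pd i f x * g x + f x * pd i g x := by
  unfold pd
  rw [fderiv_fun_mul (hf.differentiable (by simp) x)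
    (hg.differentiable (by simp) x)]
  simp [smul_eq_mul]
  ring

lemma ibp' {f g : (Fin N → ℝ) → ℝ} (hf : ContDiff ℝ (⊤ : ℕ∞) f) (hg : ContDiff ℝ (⊤ : ℕ∞) g)
    (hgc : HasCompactSupport g) (i : Fin N) :
    ∫ x, f x * pd i g x = - ∫ x, pd i f x * g x := by
  have h1 : Integrable (fun x => pd i f x * g x) :=
    ((contDiff_pd' hf i).continuous.mul hg.continuous).integrable_of_hasCompactSupport
      hgc.mul_left
  have h2 : Integrable (fun x => f x * pd i g x) :=
    (hf.continuous.mul (contDiff_pd' hg i).continuous).integrable_of_hasCompactSupport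
      (hcs_pd' hgc i).mul_left
  have h3 : Integrable (fun x => f x * g x) :=
    (hf.continuous.mul hg.continuous).integrable_of_hasCompactSupport hgc.mul_left
  exact integral_mul_fderiv_eq_neg_fderiv_mul_of_integrable h1 h2 h3
    (fun x _ => hf.differentiable (by simp) x) (fun x _ => hg.differentiable (by simp) x)

lemma expand_lhs' {n : ℕ} (A B C E : Fin n → ℝ) (v : ℝ) :
    (-(∑ j, A j) + ((∑ j, B j) / 4 - (∑ j, C j) / 2) * v + ∑ j, E j) * v
      = ∑ j, ((-(A j) + (B j / 4 - C j / 2) * v + E j) * v) := by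
  rw [← Finset.sum_mul]
  congr 1
  simp only [Finset.sum_add_distrib, Finset.sum_neg_distrib, ← Finset.sum_mul,
    Finset.sum_sub_distrib, ← Finset.sum_div]

end AuxWitten

/-- For `φ` with `Hess φ ≥ δ·Id` and `V` a smooth compactly supported vector
field, setting `q = -ΔV + (|∇φ|²/4 - Δφ/2)V + (Hess φ)V` one has
`∫ q·V dx ≥ δ ∫ |V|² dx`, hence the L² bound `‖V‖ ≤ δ⁻¹ ‖q‖`. -/
theorem witten_laplacian_one_forms_lower_bound
    (N : ℕ) (hN : 1 ≤ N)
    (φ : (Fin N → ℝ) → ℝ) (δ : ℝ) (hδ : 0 < δ)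
    (hφ : ContDiff ℝ (⊤ : ℕ∞) φ)
    (hconv : ∀ x ξ, δ * dot ξ ξ ≤ hess φ x ξ ξ)
    (V : (Fin N → ℝ) → Fin N → ℝ)
    (hV : ContDiff ℝ (⊤ : ℕ∞) V) (hVc : HasCompactSupport V)
    (q : (Fin N → ℝ) → Fin N → ℝ)
    (hq : ∀ x i, q x i =
      -lap (fun y => V y i) x +
        (dot (grad φ x) (grad φ x) / 4 - lap φ x / 2) * V x i +
        ∑ j, pd i (pd j φ) x * V x j) :
    δ * ∫ x, dot (V x) (V x) ≤ (∫ x, dot (q x) (V x)) ∧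
    Real.sqrt (∫ x, dot (V x) (V x)) ≤ δ⁻¹ * Real.sqrt (∫ x, dot (q x) (q x)) := by
  classical
  -- component smoothness and support
  have hui : ∀ i : Fin N, ContDiff ℝ (⊤ : ℕ∞) (fun x => V x i) := fun i => contDiff_pi.mp hV i
  have huc : ∀ i : Fin N, HasCompactSupport (fun x => V x i) := fun i =>
    hVc.comp_left (g := fun w : Fin N → ℝ => w i) rfl
  -- continuity of basic pieces
  have cV : ∀ i : Fin N, Continuous fun x => V x i := fun i => (hui i).continuous
  have cP : ∀ i j : Fin N, Continuous (pd j (fun y => V y i)) := fun i j =>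
    (contDiff_pd' (hui i) j).continuous
  have cPP : ∀ i j : Fin N, Continuous (pd j (pd j (fun y => V y i))) := fun i j =>
    (contDiff_pd' (contDiff_pd' (hui i) j) j).continuous
  have cG : ∀ j : Fin N, Continuous (pd j φ) := fun j => (contDiff_pd' hφ j).continuous
  have cGG : ∀ i j : Fin N, Continuous (pd i (pd j φ)) := fun i j =>
    (contDiff_pd' (contDiff_pd' hφ j) i).continuous
  have cq : ∀ i : Fin N, Continuous fun x => q x i := by
    intro i
    have hqi : (fun x => q x i) = fun x =>
        -(∑ j, pd j (pd j (fun y => V y i)) x) +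
          ((∑ j, pd j φ x * pd j φ x) / 4 - (∑ j, pd j (pd j φ) x) / 2) * V x i +
          ∑ j, pd i (pd j φ) x * V x j := by
      funext x
      rw [hq]
      simp [lap, dot, grad]
    rw [hqi]
    exact (((continuous_finset_sum _ fun j _ => cPP i j).neg.add
      ((((continuous_finset_sum _ fun j _ => (cG j).mul (cG j)).div_const 4).sub
        ((continuous_finset_sum _ fun j _ => cGG j j).div_const 2)).mul (cV i))).add
      (continuous_finset_sum _ fun j _ => (cGG i j).mul (cV j)))
  -- vanishing outside the support of V
  have master : ∀ g : (Fin N → ℝ) → ℝ, (∀ x, x ∉ tsupport V → g x = 0) →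
      HasCompactSupport g := by
    intro g h
    refine hVc.mono' fun x hx => ?_
    by_contra hts
    exact hx (h x hts)
  have hV0 : ∀ x, x ∉ tsupport V → ∀ i, V x i = 0 := fun x hx i => by
    rw [image_eq_zero_of_notMem_tsupport hx]; rfl
  have sub_ts : ∀ (f : (Fin N → ℝ) → ℝ), (∀ x, x ∉ tsupport V → f x = 0) →
      ∀ (j : Fin N) (x), x ∉ tsupport V → pd j f x = 0 := by
    intro f hf j x hx
    have hsub : tsupport f ⊆ tsupport V :=
      closure_minimal (fun y hy => by
        by_contra hy'
        exact hy (hf y hy')) isClosed_closure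
    have h2 : x ∉ tsupport f := fun h => hx (hsub h)
    have h3 : fderiv ℝ f x = 0 := by
      by_contra hne
      exact h2 (support_fderiv_subset ℝ hne)
    simp [pd, h3]
  have hP0 : ∀ (i j : Fin N) (x), x ∉ tsupport V → pd j (fun y => V y i) x = 0 :=
    fun i j x hx => sub_ts _ (fun x hx => hV0 x hx i) j x hx
  have hPP0 : ∀ (i j : Fin N) (x), x ∉ tsupport V → pd j (pd j (fun y => V y i)) x = 0 :=
    fun i j x hx => sub_ts _ (fun x hx => hP0 i j x hx) j x hx
  have hq0 : ∀ x, x ∉ tsupport V → ∀ i, q x i = 0 := by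
    intro x hx i
    rw [hq]
    simp [lap, hPP0 _ _ _ hx, hV0 x hx]
  -- integrability of the various integrands
  have intVV : Integrable (fun x => ∑ i, V x i * V x i) :=
    (continuous_finset_sum _ fun i _ => (cV i).mul (cV i)).integrable_of_hasCompactSupport
      (master _ fun x hx => by simp [hV0 x hx])
  have intqV : Integrable (fun x => ∑ i, q x i * V x i) :=
    (continuous_finset_sum _ fun i _ => (cq i).mul (cV i)).integrable_of_hasCompactSupport
      (master _ fun x hx => by simp [hV0 x hx])
  have intqq : Integrable (fun x => ∑ i, q x i * q x i) :=
    (continuous_finset_sum _ fun i _ => (cq i).mul (cq i)).integrable_of_hasCompactSupport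
      (master _ fun x hx => by simp [hq0 x hx])
  have intS : Integrable (fun x =>
      (∑ i, ∑ j, (pd j (fun y => V y i) x + V x i * pd j φ x / 2) ^ 2) +
        hess φ x (V x) (V x)) := by
    refine Continuous.integrable_of_hasCompactSupport ?_ ?_
    · refine (continuous_finset_sum _ fun i _ => continuous_finset_sum _ fun j _ =>
        (((cP i j).add (((cV i).mul (cG j)).div_const 2)).pow 2)).add ?_
      show Continuous fun x => ∑ i, ∑ j, pd i (pd j φ) x * V x i * V x j
      exact continuous_finset_sum _ fun i _ => continuous_finset_sum _ fun j _ =>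
        ((cGG i j).mul (cV i)).mul (cV j)
    · refine master _ fun x hx => ?_
      have h1 : ∀ i j : Fin N, pd j (fun y => V y i) x = 0 := fun i j => hP0 i j x hx
      simp [hess, hV0 x hx, h1]
  -- the four pieces of D i j
  have inta : ∀ i j : Fin N, Integrable (fun x => V x i * pd j (pd j (fun y => V y i)) x) :=
    fun i j => ((cV i).mul (cPP i j)).integrable_of_hasCompactSupport
      (master _ fun x hx => by simp [hV0 x hx])
  have intb : ∀ i j : Fin N, Integrable (fun x => pd j (pd j φ) x * (V x i * V x i)) :=
    fun i j => ((cGG j j).mul ((cV i).mul (cV i))).integrable_of_hasCompactSupport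
      (master _ fun x hx => by simp [hV0 x hx])
  have intc : ∀ i j : Fin N, Integrable
      (fun x => pd j (fun y => V y i) x * pd j (fun y => V y i) x) :=
    fun i j => ((cP i j).mul (cP i j)).integrable_of_hasCompactSupport
      (master _ fun x hx => by simp [hP0 i j x hx])
  have intd : ∀ i j : Fin N, Integrable (fun x => pd j φ x *
      (pd j (fun y => V y i) x * V x i + V x i * pd j (fun y => V y i) x)) :=
    fun i j => ((cG j).mul (((cP i j).mul (cV i)).add
      ((cV i).mul (cP i j)))).integrable_of_hasCompactSupport
      (master _ fun x hx => by simp [hV0 x hx])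
  -- integration by parts identities
  have e1 : ∀ i j : Fin N, ∫ x, V x i * pd j (pd j (fun y => V y i)) x
      = - ∫ x, pd j (fun y => V y i) x * pd j (fun y => V y i) x :=
    fun i j => ibp' (hui i) (contDiff_pd' (hui i) j) (hcs_pd' (huc i) j) j
  have e2 : ∀ i j : Fin N, ∫ x, pd j φ x *
        (pd j (fun y => V y i) x * V x i + V x i * pd j (fun y => V y i) x)
      = - ∫ x, pd j (pd j φ) x * (V x i * V x i) := by
    intro i j
    have h := ibp' (contDiff_pd' hφ j) ((hui i).mul (hui i)) (huc i).mul_right j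
    rw [← h]
    refine integral_congr_ae (Eventually.of_forall fun x => ?_)
    exact congrArg (fun t => pd j φ x * t) (pd_mul' (hui i) (hui i) j x).symm
  -- the error terms integrate to zero
  have hDzero : ∀ i j : Fin N, ∫ x,
      (-(V x i * pd j (pd j (fun y => V y i)) x)
        - pd j (pd j φ) x * (V x i * V x i) / 2
        - pd j (fun y => V y i) x * pd j (fun y => V y i) x
        - pd j φ x * (pd j (fun y => V y i) x * V x i
            + V x i * pd j (fun y => V y i) x) / 2) = 0 := by
    intro i j
    have ja : Integrable (fun x => -(V x i * pd j (pd j (fun y => V y i)) x)) :=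
      (inta i j).neg
    have jb : Integrable (fun x => pd j (pd j φ) x * (V x i * V x i) / 2) :=
      (intb i j).div_const 2
    have jd : Integrable (fun x => pd j φ x * (pd j (fun y => V y i) x * V x i
        + V x i * pd j (fun y => V y i) x) / 2) := (intd i j).div_const 2
    have jab : Integrable (fun x => -(V x i * pd j (pd j (fun y => V y i)) x)
        - pd j (pd j φ) x * (V x i * V x i) / 2) := ja.sub jb
    have jabc : Integrable (fun x => -(V x i * pd j (pd j (fun y => V y i)) x)
        - pd j (pd j φ) x * (V x i * V x i) / 2
        - pd j (fun y => V y i) x * pd j (fun y => V y i) x) := jab.sub (intc i j)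
    rw [integral_sub jabc jd, integral_sub jab (intc i j), integral_sub ja jb,
      integral_neg, integral_div, integral_div]
    have h1 := e1 i j
    have h2 := e2 i j
    linarith
  -- pointwise algebraic identity
  have ptwise : ∀ x, (∑ i, q x i * V x i) =
      ((∑ i, ∑ j, (pd j (fun y => V y i) x + V x i * pd j φ x / 2) ^ 2) +
        hess φ x (V x) (V x)) +
      ∑ i, ∑ j,
        (-(V x i * pd j (pd j (fun y => V y i)) x)
          - pd j (pd j φ) x * (V x i * V x i) / 2
          - pd j (fun y => V y i) x * pd j (fun y => V y i) x
          - pd j φ x * (pd j (fun y => V y i) x * V x i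
              + V x i * pd j (fun y => V y i) x) / 2) := by
    intro x
    simp only [hq, lap, dot, grad, hess]
    rw [← Finset.sum_add_distrib, ← Finset.sum_add_distrib]
    refine Finset.sum_congr rfl fun i _ => ?_
    rw [← Finset.sum_add_distrib, ← Finset.sum_add_distrib]
    rw [expand_lhs' (fun j => pd j (pd j (fun y => V y i)) x)
      (fun j => pd j φ x * pd j φ x) (fun j => pd j (pd j φ) x)
      (fun j => pd i (pd j φ) x * V x j) (V x i)]
    refine Finset.sum_congr rfl fun j _ => ?_
    ring
  -- the main integral identity and lower bound
  have intDij : ∀ i j : Fin N, Integrable (fun x =>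
      (-(V x i * pd j (pd j (fun y => V y i)) x)
        - pd j (pd j φ) x * (V x i * V x i) / 2
        - pd j (fun y => V y i) x * pd j (fun y => V y i) x
        - pd j φ x * (pd j (fun y => V y i) x * V x i
            + V x i * pd j (fun y => V y i) x) / 2)) := fun i j =>
    (((inta i j).neg.sub ((intb i j).div_const 2)).sub (intc i j)).sub
      ((intd i j).div_const 2)
  have intDD : Integrable (fun x => ∑ i : Fin N, ∑ j : Fin N,
      (-(V x i * pd j (pd j (fun y => V y i)) x)
        - pd j (pd j φ) x * (V x i * V x i) / 2
        - pd j (fun y => V y i) x * pd j (fun y => V y i) x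
        - pd j φ x * (pd j (fun y => V y i) x * V x i
            + V x i * pd j (fun y => V y i) x) / 2)) := by
    refine integrable_finset_sum _ fun i _ => integrable_finset_sum _ fun j _ => ?_
    exact intDij i j
  have main : (∫ x, ∑ i, q x i * V x i) = ∫ x,
      ((∑ i, ∑ j, (pd j (fun y => V y i) x + V x i * pd j φ x / 2) ^ 2) +
        hess φ x (V x) (V x)) := by
    have hzero : (∫ x, ∑ i : Fin N, ∑ j : Fin N,
        (-(V x i * pd j (pd j (fun y => V y i)) x)
          - pd j (pd j φ) x * (V x i * V x i) / 2
          - pd j (fun y => V y i) x * pd j (fun y => V y i) x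
          - pd j φ x * (pd j (fun y => V y i) x * V x i
              + V x i * pd j (fun y => V y i) x) / 2)) = 0 := by
      rw [integral_finset_sum _ fun i _ => integrable_finset_sum _ fun j _ => intDij i j]
      refine Finset.sum_eq_zero fun i _ => ?_
      rw [integral_finset_sum _ fun j _ => intDij i j]
      exact Finset.sum_eq_zero fun j _ => hDzero i j
    calc (∫ x, ∑ i, q x i * V x i) = ∫ x,
        (((∑ i, ∑ j, (pd j (fun y => V y i) x + V x i * pd j φ x / 2) ^ 2) +
          hess φ x (V x) (V x)) +
        ∑ i, ∑ j,
          (-(V x i * pd j (pd j (fun y => V y i)) x)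
            - pd j (pd j φ) x * (V x i * V x i) / 2
            - pd j (fun y => V y i) x * pd j (fun y => V y i) x
            - pd j φ x * (pd j (fun y => V y i) x * V x i
                + V x i * pd j (fun y => V y i) x) / 2)) := by
          exact integral_congr_ae (Eventually.of_forall fun x => ptwise x)
      _ = _ := by rw [integral_add intS intDD, hzero, add_zero]
  have lower : δ * (∫ x, ∑ i, V x i * V x i) ≤ ∫ x, ∑ i, q x i * V x i := by
    rw [main, ← integral_const_mul]
    refine integral_mono (intVV.const_mul δ) intS fun x => ?_
    have h2 := hconv x (V x)
    have h3 : (0:ℝ) ≤ ∑ i, ∑ j, (pd j (fun y => V y i) x + V x i * pd j φ x / 2) ^ 2 :=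
      Finset.sum_nonneg fun i _ => Finset.sum_nonneg fun j _ => sq_nonneg _
    have h4 : dot (V x) (V x) = ∑ i, V x i * V x i := rfl
    rw [h4] at h2
    simp only
    linarith
  have hA0 : (0:ℝ) ≤ ∫ x, ∑ i, V x i * V x i :=
    integral_nonneg fun x => Finset.sum_nonneg fun i _ => mul_self_nonneg _
  -- Cauchy-Schwarz style bound
  have intr : Integrable (fun x => ∑ i, (q x i - δ * V x i) ^ 2) :=
    (continuous_finset_sum _ fun i _ =>
      ((cq i).sub (continuous_const.mul (cV i))).pow 2).integrable_of_hasCompactSupport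
      (master _ fun x hx => by simp [hq0 x hx, hV0 x hx])
  have hr : ∀ x, (∑ i, (q x i - δ * V x i) ^ 2) =
      (∑ i, q x i * q x i) - 2 * δ * (∑ i, q x i * V x i) + δ ^ 2 * (∑ i, V x i * V x i) := by
    intro x
    rw [Finset.mul_sum, Finset.mul_sum, ← Finset.sum_sub_distrib, ← Finset.sum_add_distrib]
    exact Finset.sum_congr rfl fun i _ => by ring
  have hCS : (0:ℝ) ≤ (∫ x, ∑ i, q x i * q x i) - 2 * δ * (∫ x, ∑ i, q x i * V x i)
      + δ ^ 2 * (∫ x, ∑ i, V x i * V x i) := by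
    have h0 : (0:ℝ) ≤ ∫ x, ∑ i, (q x i - δ * V x i) ^ 2 :=
      integral_nonneg fun x => Finset.sum_nonneg fun i _ => sq_nonneg _
    have heq : (∫ x, ∑ i, (q x i - δ * V x i) ^ 2) =
        (∫ x, ∑ i, q x i * q x i) - 2 * δ * (∫ x, ∑ i, q x i * V x i)
          + δ ^ 2 * (∫ x, ∑ i, V x i * V x i) := by
      calc (∫ x, ∑ i, (q x i - δ * V x i) ^ 2)
          = ∫ x, ((∑ i, q x i * q x i) - 2 * δ * (∑ i, q x i * V x i)
              + δ ^ 2 * (∑ i, V x i * V x i)) :=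
            integral_congr_ae (Eventually.of_forall fun x => hr x)
        _ = _ := by
            have k1 : Integrable (fun x => 2 * δ * ∑ i, q x i * V x i) :=
              intqV.const_mul (2 * δ)
            have k2 : Integrable (fun x => δ ^ 2 * ∑ i, V x i * V x i) :=
              intVV.const_mul (δ ^ 2)
            have k3 : Integrable (fun x =>
                (∑ i, q x i * q x i) - 2 * δ * ∑ i, q x i * V x i) := intqq.sub k1
            rw [integral_add k3 k2, integral_sub intqq k1, integral_const_mul,
              integral_const_mul]
    linarith [heq ▸ h0]
  have hC2 : δ ^ 2 * (∫ x, ∑ i, V x i * V x i) ≤ ∫ x, ∑ i, q x i * q x i := by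
    nlinarith [lower, hA0, hδ]
  have hA_le : (∫ x, ∑ i, V x i * V x i) ≤ δ⁻¹ ^ 2 * ∫ x, ∑ i, q x i * q x i := by
    have hmul := mul_le_mul_of_nonneg_left hC2 (by positivity : (0:ℝ) ≤ δ⁻¹ ^ 2)
    have hone : δ⁻¹ ^ 2 * (δ ^ 2 * (∫ x, ∑ i, V x i * V x i))
        = ∫ x, ∑ i, V x i * V x i := by
      field_simp
    linarith
  have final : Real.sqrt (∫ x, ∑ i, V x i * V x i)
      ≤ δ⁻¹ * Real.sqrt (∫ x, ∑ i, q x i * q x i) := by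
    calc Real.sqrt (∫ x, ∑ i, V x i * V x i)
        ≤ Real.sqrt (δ⁻¹ ^ 2 * ∫ x, ∑ i, q x i * q x i) := Real.sqrt_le_sqrt hA_le
      _ = δ⁻¹ * Real.sqrt (∫ x, ∑ i, q x i * q x i) := by
          rw [Real.sqrt_mul (by positivity), Real.sqrt_sq (by positivity)]
  exact ⟨lower, final⟩
end
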